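/- Averaging a multivariate polynomial over Hamming-weight layers yields a univariate polynomial of the same degree: if p : {0,1}^n → ℝ is computed by a multilinear polynomial of degree at most d, then there exists a univariate real polynomial f of degree at most d such that for every 0 ≤ m ≤ n, E_{z ∼ D_m}[p(z)] = f(m), where D_m is uniform on the weight-m layer of {0,1}^n. -/

import Mathlib

open Finset Polynomial

lemma count_layer {n m : ℕ} (S : Finset (Fin n)) (hkm : S.card ≤ m) :
    (Finset.univ.filter (fun z : Fin n → Bool =>
        (Finset.univ.filter (fun i => z i = true)).card = m ∧ ∀ i ∈ S, z i = true)).card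
      = (n - S.card).choose (m - S.card) := by
  have h1 : (Finset.powersetCard (m - S.card) Sᶜ).card = (n - S.card).choose (m - S.card) := by
    rw [Finset.card_powersetCard, Finset.card_compl, Fintype.card_fin]
  rw [← h1]
  refine Finset.card_bij'
    (fun z _ => (Finset.univ.filter (fun i => z i = true)) \ S)
    (fun U _ => fun i => decide (i ∈ S ∪ U)) ?_ ?_ ?_ ?_
  · intro z hz
    simp only [Finset.mem_filter, Finset.mem_univ, true_and] at hz
    obtain ⟨hcard, hS⟩ := hz
    have hsub : S ⊆ Finset.univ.filter (fun i => z i = true) := by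
      intro i hi; simp [hS i hi]
    rw [Finset.mem_powersetCard]
    constructor
    · intro i hi
      simp only [Finset.mem_sdiff] at hi
      simp [Finset.mem_compl, hi.2]
    · rw [Finset.card_sdiff_of_subset hsub, hcard]
  · intro U hU
    rw [Finset.mem_powersetCard] at hU
    obtain ⟨hsub, hcard⟩ := hU
    have hdisj : Disjoint S U := by
      rw [Finset.disjoint_left]
      intro i hiS hiU
      exact absurd hiS (by simpa [Finset.mem_compl] using hsub hiU)
    have hfil : (Finset.univ.filter (fun i => decide (i ∈ S ∪ U) = true)) = S ∪ U := by
      ext i; simp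
    simp only [Finset.mem_filter, Finset.mem_univ, true_and]
    refine ⟨?_, fun i hi => by simp [Finset.mem_union, hi]⟩
    rw [hfil, Finset.card_union_of_disjoint hdisj, hcard]
    omega
  · intro z hz
    simp only [Finset.mem_filter, Finset.mem_univ, true_and] at hz
    obtain ⟨hcard, hS⟩ := hz
    have hsub : S ⊆ Finset.univ.filter (fun i => z i = true) := by
      intro i hi; simp [hS i hi]
    funext i
    simp only [Finset.union_sdiff_of_subset hsub, Finset.mem_filter, Finset.mem_univ, true_and]
    cases h : z i <;> simp [h]
  · intro U hU
    rw [Finset.mem_powersetCard] at hU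
    obtain ⟨hsub, hcard⟩ := hU
    have hdisj : Disjoint S U := by
      rw [Finset.disjoint_left]
      intro i hiS hiU
      exact absurd hiS (by simpa [Finset.mem_compl] using hsub hiU)
    have hfil : (Finset.univ.filter (fun i => decide (i ∈ S ∪ U) = true)) = S ∪ U := by
      ext i; simp
    simp only [hfil, Finset.union_sdiff_cancel_left hdisj]

/-- Averaging a degree-`d` multilinear polynomial over the Hamming-weight layers
of `{0,1}^n` yields a univariate polynomial of degree at most `d`. -/
theorem layer_average_is_polynomial (n d : ℕ) (p : (Fin n → Bool) → ℝ)
    (α : Finset (Fin n) → ℝ) (hdeg : ∀ S : Finset (Fin n), d < S.card → α S = 0)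
    (hrep : ∀ x, p x = ∑ S : Finset (Fin n), α S * ∏ i ∈ S, (if x i then (1 : ℝ) else 0)) :
    ∃ f : Polynomial ℝ, f.natDegree ≤ d ∧
      ∀ m : ℕ, m ≤ n →
        (∑ z ∈ Finset.univ.filter (fun z : Fin n → Bool =>
            (Finset.univ.filter (fun i => z i = true)).card = m), p z) / (n.choose m : ℝ)
          = f.eval (m : ℝ) := by
  refine ⟨∑ S : Finset (Fin n),
      Polynomial.C (α S / ((S.card.factorial : ℝ) * (n.choose S.card : ℝ)))
        * descPochhammer ℝ S.card, ?_, ?_⟩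
  · apply Polynomial.natDegree_sum_le_of_forall_le
    intro S _
    by_cases h : d < S.card
    · rw [hdeg S h]; simp
    · push_neg at h
      calc (Polynomial.C (α S / ((S.card.factorial : ℝ) * (n.choose S.card : ℝ)))
            * descPochhammer ℝ S.card).natDegree
          ≤ (descPochhammer ℝ S.card).natDegree := Polynomial.natDegree_C_mul_le _ _
        _ = S.card := by rw [descPochhammer_natDegree]
        _ ≤ d := h
  · intro m hm
    have hcnm : (0 : ℝ) < (n.choose m : ℝ) := by
      exact_mod_cast Nat.choose_pos hm
    -- rewrite the eval
    rw [Polynomial.eval_finset_sum]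
    simp only [Polynomial.eval_mul, Polynomial.eval_C,
      descPochhammer_eval_eq_descFactorial]
    -- rewrite LHS
    have hLHS : (∑ z ∈ Finset.univ.filter (fun z : Fin n → Bool =>
            (Finset.univ.filter (fun i => z i = true)).card = m), p z)
        = ∑ S : Finset (Fin n), α S *
            ((Finset.univ.filter (fun z : Fin n → Bool =>
              (Finset.univ.filter (fun i => z i = true)).card = m ∧ ∀ i ∈ S, z i = true)).card : ℝ) := by
      simp only [hrep]
      rw [Finset.sum_comm]
      refine Finset.sum_congr rfl fun S _ => ?_
      rw [← Finset.mul_sum]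
      congr 1
      simp only [Finset.prod_boole]
      rw [← Finset.filter_filter, Finset.card_filter]
      push_cast
      refine Finset.sum_congr rfl fun z _ => ?_
      by_cases h : ∀ i ∈ S, z i = true <;> simp [h]
    rw [hLHS, Finset.sum_div]
    refine Finset.sum_congr rfl fun S _ => ?_
    set k := S.card with hk
    have hkn : k ≤ n := by
      simpa using Finset.card_le_card (Finset.subset_univ S)
    by_cases hkm : k ≤ m
    · rw [count_layer S hkm]
      have hid : (n - k).choose (m - k) * (k.factorial * n.choose k)
          = m.descFactorial k * n.choose m := by
        have h1 := Nat.choose_mul (n := n) hkm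
        have h2 := Nat.descFactorial_eq_factorial_mul_choose m k
        calc (n - k).choose (m - k) * (k.factorial * n.choose k)
            = k.factorial * (n.choose k * (n - k).choose (m - k)) := by ring
          _ = k.factorial * (n.choose m * m.choose k) := by rw [← h1]
          _ = (k.factorial * m.choose k) * n.choose m := by ring
          _ = m.descFactorial k * n.choose m := by rw [← h2]
      have hkf : (0 : ℝ) < (k.factorial : ℝ) := by exact_mod_cast k.factorial_pos
      have hck : (0 : ℝ) < (n.choose k : ℝ) := by exact_mod_cast Nat.choose_pos hkn
      have hcast : ((n - k).choose (m - k) : ℝ) * ((k.factorial : ℝ) * (n.choose k : ℝ))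
          = (m.descFactorial k : ℝ) * (n.choose m : ℝ) := by exact_mod_cast hid
      field_simp
      linear_combination α S * hcast
    · push_neg at hkm
      have hempty : (Finset.univ.filter (fun z : Fin n → Bool =>
          (Finset.univ.filter (fun i => z i = true)).card = m ∧ ∀ i ∈ S, z i = true)) = ∅ := by
        rw [Finset.filter_eq_empty_iff]
        intro z _
        rintro ⟨hcard, hS⟩
        have hsub : S ⊆ Finset.univ.filter (fun i => z i = true) := by
          intro i hi; simp [hS i hi]
        have := Finset.card_le_card hsub
        omega
      rw [hempty]
      rw [Nat.descFactorial_eq_zero_iff_lt.2 hkm]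
      simp
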